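/- Let V be a finite-dimensional F₃-vector space with a quadratic form q : V → F₃, let A ⊆ V be an affine subspace, and for r ∈ F₃ set n_r(A) = #{x ∈ A : q(x) = r}. Then for each r ∈ F₃, either dim A ≤ 2 and n_r(A) ≤ 5, or n_r(A) ≡ 0 (mod 3). -/

import Mathlib

open MvPolynomial QuadraticMap Finset in
private lemma quad_to_poly' {V : Type*} [AddCommGroup V] [Module (ZMod 3) V]
    (q : QuadraticForm (ZMod 3) V) {d : ℕ} (g : Fin d → V) (a₀ : V) (r : ZMod 3) :
    ∃ f : MvPolynomial (Fin d) (ZMod 3), f.totalDegree ≤ 2 ∧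
      ∀ c : Fin d → ZMod 3, MvPolynomial.eval c f = q (a₀ + ∑ i, c i • g i) - r := by
  classical
  refine ⟨C (q a₀ - r)
    + (∑ i, C (polar q a₀ (g i)) * X i)
    + (∑ i, C (q (g i)) * X i ^ 2)
    + ∑ ij ∈ Finset.univ.sym2 with ¬ ij.IsDiag,
        Sym2.lift ⟨fun i j => C (polar q (g i) (g j)) * (X i * X j),
          fun i j => by dsimp only; rw [polar_comm]; ring⟩ ij, ?_, ?_⟩
  · apply le_trans (totalDegree_add _ _) (max_le _ _)
    · apply le_trans (totalDegree_add _ _) (max_le _ _)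
      · apply le_trans (totalDegree_add _ _) (max_le _ _)
        · exact (totalDegree_C _).le.trans (by norm_num)
        · apply totalDegree_finsetSum_le
          intro i _
          refine le_trans (totalDegree_mul _ _) ?_
          rw [totalDegree_C, totalDegree_X]
          norm_num
      · apply totalDegree_finsetSum_le
        intro i _
        refine le_trans (totalDegree_mul _ _) ?_
        refine le_trans (add_le_add (totalDegree_C _).le (totalDegree_pow _ _)) ?_
        rw [totalDegree_X]
    · apply totalDegree_finsetSum_le
      intro ij _
      induction ij using Sym2.ind with
      | _ i j =>
        rw [Sym2.lift_mk]
        refine le_trans (totalDegree_mul _ _) ?_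
        refine le_trans (add_le_add (totalDegree_C _).le (totalDegree_mul _ _)) ?_
        rw [totalDegree_X, totalDegree_X]
  · intro c
    have h1 : q (a₀ + ∑ i, c i • g i)
        = q a₀ + q (∑ i, c i • g i) + polar q a₀ (∑ i, c i • g i) :=
      QuadraticMap.map_add q a₀ _
    have h2 : polar q a₀ (∑ i, c i • g i) = ∑ i, polar q a₀ (g i) * c i := by
      simp_rw [← polarBilin_apply_apply, map_sum, _root_.map_smul, polarBilin_apply_apply,
        smul_eq_mul, mul_comm]
    have h3 : q (∑ i, c i • g i) = ∑ i, q (g i) * c i ^ 2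
        + ∑ ij ∈ Finset.univ.sym2 with ¬ ij.IsDiag,
          Sym2.lift ⟨fun i j => c i * c j * polar q (g i) (g j),
            fun i j => by dsimp only; rw [polar_comm]; ring⟩ ij := by
      rw [QuadraticMap.map_sum]
      congr 1
      · refine Finset.sum_congr rfl fun i _ => ?_
        rw [QuadraticMap.map_smul, smul_eq_mul]; ring
      · refine Finset.sum_congr rfl fun ij _ => ?_
        induction ij using Sym2.ind with
        | _ i j => simp [polar_smul_left, polar_smul_right, smul_eq_mul]; ring
    simp only [map_add, map_sum, map_mul, eval_C, eval_X, eval_pow, h1, h2, h3]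
    have h4 : ∀ ij ∈ Finset.univ.sym2.filter (fun ij : Sym2 (Fin d) => ¬ ij.IsDiag),
        MvPolynomial.eval c (Sym2.lift ⟨fun i j => C (polar q (g i) (g j)) * (X i * X j),
          fun i j => by dsimp only; rw [polar_comm]; ring⟩ ij)
        = Sym2.lift ⟨fun i j => c i * c j * polar q (g i) (g j),
          fun i j => by dsimp only; rw [polar_comm]; ring⟩ ij := by
      intro ij _
      induction ij using Sym2.ind with
      | _ i j => simp; ring
    rw [Finset.sum_congr rfl h4]
    ring

set_option maxHeartbeats 1000000 in
private lemma key2' : ∀ A B C D E G : ZMod 3,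
    ((Finset.univ : Finset (ZMod 3 × ZMod 3)).filter
      (fun p => G + D * p.1 + E * p.2 + A * p.1 ^ 2 + B * p.2 ^ 2 + C * (p.1 * p.2) = 0)).card ≤ 5 ∨
    3 ∣ ((Finset.univ : Finset (ZMod 3 × ZMod 3)).filter
      (fun p => G + D * p.1 + E * p.2 + A * p.1 ^ 2 + B * p.2 ^ 2 + C * (p.1 * p.2) = 0)).card := by
  decide

open QuadraticMap in
private lemma expand2' {V : Type*} [AddCommGroup V] [Module (ZMod 3) V]
    (q : QuadraticForm (ZMod 3) V) (a₀ : V) (g : Fin 2 → V) (c : Fin 2 → ZMod 3) :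
    q (a₀ + ∑ i, c i • g i) = (q a₀ + polar q a₀ (g 0) * c 0 + polar q a₀ (g 1) * c 1)
      + q (g 0) * c 0 ^ 2 + q (g 1) * c 1 ^ 2 + polar q (g 0) (g 1) * (c 0 * c 1) := by
  rw [Fin.sum_univ_two, QuadraticMap.map_add q a₀, QuadraticMap.map_add q (c 0 • g 0)]
  rw [QuadraticMap.map_smul, QuadraticMap.map_smul, polar_add_right, polar_smul_right,
    polar_smul_right, polar_smul_left, polar_smul_right]
  simp only [smul_eq_mul]
  ring


open QuadraticMap in
private lemma count_param' {V : Type*} [AddCommGroup V] [Module (ZMod 3) V]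
    (q : QuadraticForm (ZMod 3) V) (A : AffineSubspace (ZMod 3) V) (r : ZMod 3)
    {a₀ : V} (ha₀ : a₀ ∈ A) {n : ℕ} (b : Module.Basis (Fin n) (ZMod 3) A.direction) :
    {x : V | x ∈ A ∧ q x = r}.ncard
      = {c : Fin n → ZMod 3 | q (a₀ + ∑ i, c i • (b i : V)) = r}.ncard := by
  classical
  let Φ : (Fin n → ZMod 3) → V := fun c => a₀ + ∑ i, c i • (b i : V)
  have hΦ : ∀ c, Φ c = a₀ + ((b.equivFun.symm c : A.direction) : V) := by
    intro c
    simp [Φ, Module.Basis.equivFun_symm_apply]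
  have hΦinj : Function.Injective Φ := by
    intro c c' h
    rw [hΦ, hΦ] at h
    exact b.equivFun.symm.injective (Subtype.coe_injective (add_left_cancel h))
  have himg : {x : V | x ∈ A ∧ q x = r} = Φ '' {c | q (Φ c) = r} := by
    ext x
    constructor
    · rintro ⟨hx, hqx⟩
      have hw : x - a₀ ∈ A.direction := AffineSubspace.vsub_mem_direction hx ha₀
      refine ⟨b.equivFun ⟨x - a₀, hw⟩, ?_, ?_⟩ <;>
        simp only [Set.mem_setOf_eq, hΦ, LinearEquiv.symm_apply_apply] <;>
        simp [hqx]
    · rintro ⟨c, hc, rfl⟩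
      refine ⟨?_, hc⟩
      rw [hΦ, add_comm]
      exact AffineSubspace.vadd_mem_of_mem_direction (b.equivFun.symm c).2 ha₀
  rw [himg, Set.ncard_image_of_injective _ hΦinj]

/-- for a quadratic form `q` on an `𝔽₃`-vector space and an affine
subspace `A`, the number `n_r(A)` of points of `A` on which `q` takes the value `r`
satisfies: either `dim A ≤ 2` and `n_r(A) ≤ 5`, or `n_r(A) ≡ 0 (mod 3)`. -/
theorem count_in_affine_subspace {V : Type*} [AddCommGroup V] [Module (ZMod 3) V]
    [Fintype V] (q : QuadraticForm (ZMod 3) V) (A : AffineSubspace (ZMod 3) V)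
    (r : ZMod 3) :
    (Module.finrank (ZMod 3) A.direction ≤ 2 ∧
      {x : V | x ∈ A ∧ q x = r}.ncard ≤ 5) ∨
    3 ∣ {x : V | x ∈ A ∧ q x = r}.ncard := by
  classical
  rcases (A : Set V).eq_empty_or_nonempty with hA | ⟨a₀, ha₀⟩
  · right
    have he : {x : V | x ∈ A ∧ q x = r} = ∅ := by
      ext x
      simp only [Set.mem_setOf_eq, Set.mem_empty_iff_false, iff_false, not_and]
      intro hx
      exact absurd hx (Set.eq_empty_iff_forall_notMem.mp hA x)
    rw [he]
    simp
  have hfd : FiniteDimensional (ZMod 3) A.direction := inferInstance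
  by_cases h3d : 3 ≤ Module.finrank (ZMod 3) A.direction
  · -- Chevalley–Warning
    right
    let b := Module.finBasis (ZMod 3) A.direction
    rw [count_param' q A r ha₀ b]
    obtain ⟨f, hdeg, hev⟩ := quad_to_poly' q (fun i => (b i : V)) a₀ r
    have hset : {c | q (a₀ + ∑ i, c i • (b i : V)) = r}
        = {c | MvPolynomial.eval c f = 0} := by
      ext c
      simp only [Set.mem_setOf_eq, hev, sub_eq_zero]
    have hdvd : (3 : ℕ) ∣ Fintype.card {c : Fin _ → ZMod 3 // MvPolynomial.eval c f = 0} :=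
      char_dvd_card_solutions 3 (lt_of_le_of_lt hdeg (by simp; omega))
    rw [hset, ← Nat.card_coe_set_eq, Nat.card_eq_fintype_card]
    convert hdvd using 2
    rfl
  · push_neg at h3d
    by_cases hd2 : Module.finrank (ZMod 3) A.direction = 2
    · -- dimension 2
      let b : Module.Basis (Fin 2) (ZMod 3) A.direction :=
        (Module.finBasis (ZMod 3) A.direction).reindex (finCongr hd2)
      rw [count_param' q A r ha₀ b]
      have hE : ∀ c : Fin 2 → ZMod 3, (q (a₀ + ∑ i, c i • (b i : V)) = r) ↔
          ((q a₀ - r) + QuadraticMap.polar q a₀ (b 0) * c 0 + QuadraticMap.polar q a₀ (b 1) * c 1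
            + q ((b 0 : V)) * c 0 ^ 2 + q ((b 1 : V)) * c 1 ^ 2
            + QuadraticMap.polar q (b 0) (b 1) * (c 0 * c 1) = 0) := by
        intro c
        rw [expand2' q a₀ (fun i => (b i : V)) c, ← sub_eq_zero]
        constructor <;> intro h <;> linear_combination h
      have hbij : {c : Fin 2 → ZMod 3 | q (a₀ + ∑ i, c i • (b i : V)) = r}.ncard
          = ((Finset.univ : Finset (ZMod 3 × ZMod 3)).filter
              (fun p => (q a₀ - r) + QuadraticMap.polar q a₀ (b 0) * p.1 + QuadraticMap.polar q a₀ (b 1) * p.2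
                + q ((b 0 : V)) * p.1 ^ 2 + q ((b 1 : V)) * p.2 ^ 2
                + QuadraticMap.polar q (b 0) (b 1) * (p.1 * p.2) = 0)).card := by
        rw [← Set.ncard_coe_finset]
        have himg2 : (((Finset.univ : Finset (ZMod 3 × ZMod 3)).filter
              (fun p => (q a₀ - r) + QuadraticMap.polar q a₀ (b 0) * p.1 + QuadraticMap.polar q a₀ (b 1) * p.2
                + q ((b 0 : V)) * p.1 ^ 2 + q ((b 1 : V)) * p.2 ^ 2
                + QuadraticMap.polar q (b 0) (b 1) * (p.1 * p.2) = 0) : Finset (ZMod 3 × ZMod 3)) : Set (ZMod 3 × ZMod 3))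
            = (finTwoArrowEquiv (ZMod 3)) '' {c | q (a₀ + ∑ i, c i • (b i : V)) = r} := by
          ext p
          simp only [Finset.coe_filter, Finset.mem_univ, true_and, Set.mem_setOf_eq,
            Set.mem_image]
          constructor
          · intro hp
            refine ⟨fun i => if i = 0 then p.1 else p.2, ?_, ?_⟩
            · rw [hE]
              simpa using hp
            · simp [finTwoArrowEquiv]
          · rintro ⟨c, hc, rfl⟩
            rw [hE] at hc
            simpa [finTwoArrowEquiv] using hc
        rw [himg2, Set.ncard_image_of_injective _ (finTwoArrowEquiv (ZMod 3)).injective]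
      rw [hbij]
      rcases key2' (q ((b 0 : V))) (q ((b 1 : V))) (QuadraticMap.polar q (b 0) (b 1))
          (QuadraticMap.polar q a₀ (b 0)) (QuadraticMap.polar q a₀ (b 1)) (q a₀ - r) with h | h
      · exact Or.inl ⟨le_of_eq hd2, h⟩
      · exact Or.inr h
    · -- dimension ≤ 1
      left
      refine ⟨by omega, ?_⟩
      let b := Module.finBasis (ZMod 3) A.direction
      rw [count_param' q A r ha₀ b]
      calc {c : Fin _ → ZMod 3 | q (a₀ + ∑ i, c i • (b i : V)) = r}.ncard
          ≤ (Set.univ : Set (Fin (Module.finrank (ZMod 3) A.direction) → ZMod 3)).ncard :=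
            Set.ncard_le_ncard (Set.subset_univ _) (Set.finite_univ)
        _ = 3 ^ (Module.finrank (ZMod 3) A.direction) := by
            rw [Set.ncard_univ, Nat.card_eq_fintype_card]; simp
        _ ≤ 3 ^ 1 := Nat.pow_le_pow_right (by norm_num) (by omega)
        _ ≤ 5 := by norm_num
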